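/- Let E be a real inner product space, U ⊆ E a nonempty convex set, μ > 0 and ε ≥ 0. Let f : E → ℝ be differentiable on U and μ-strongly convex on U, and let g : E → ℝ satisfy |f u − g u| ≤ ε for all u ∈ U. If u₁ ∈ U minimizes f over U and u₂ ∈ U minimizes g over U, then ‖u₁ − u₂‖ ≤ 2 · √(ε / μ). -/

import Mathlib

/-- Abstract form of Proposition 1: a uniform `ε`-perturbation of a
differentiable, `μ`-strongly convex objective on a nonempty convex set moves
the constrained minimizer by at most `2 √(ε/μ)`. -/
theorem strong_convex_perturbed_minimizer_bound
    {E : Type*} [NormedAddCommGroup E] [InnerProductSpace ℝ E]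
    (U : Set E) (hUne : U.Nonempty) (hUconvex : Convex ℝ U)
    (μ : ℝ) (hμ : 0 < μ) (ε : ℝ) (hε : 0 ≤ ε)
    (f g : E → ℝ)
    (hdiff : DifferentiableOn ℝ f U)
    (hsc : StrongConvexOn U μ f)
    (hclose : ∀ u ∈ U, |f u - g u| ≤ ε)
    (u₁ u₂ : E) (hu₁ : u₁ ∈ U) (hu₂ : u₂ ∈ U)
    (hmin₁ : IsMinOn f U u₁) (hmin₂ : IsMinOn g U u₂) :
    ‖u₁ - u₂‖ ≤ 2 * Real.sqrt (ε / μ) := by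
  set A : ℝ := μ / 2 * ‖u₂ - u₁‖ ^ 2 with hA
  have hAnonneg : 0 ≤ A := by positivity
  -- f u₂ - f u₁ ≤ 2ε
  have h1 : |f u₁ - g u₁| ≤ ε := hclose u₁ hu₁
  have h2 : |f u₂ - g u₂| ≤ ε := hclose u₂ hu₂
  have hg : g u₂ ≤ g u₁ := hmin₂ hu₁
  have hgap : f u₂ - f u₁ ≤ 2 * ε := by
    have h1' := abs_le.mp h1
    have h2' := abs_le.mp h2
    linarith [h1'.1, h1'.2, h2'.1, h2'.2]
  -- for t ∈ (0,1), (1-t) * A ≤ f u₂ - f u₁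
  have hseg : ∀ t : ℝ, 0 < t → t < 1 → (1 - t) * A ≤ f u₂ - f u₁ := by
    intro t ht0 ht1
    have ht0' : (0:ℝ) ≤ t := le_of_lt ht0
    have ht1' : (0:ℝ) ≤ 1 - t := by linarith
    have hmem : t • u₂ + (1 - t) • u₁ ∈ U :=
      hUconvex hu₂ hu₁ ht0' ht1' (by ring)
    have hineq := hsc.2 hu₂ hu₁ ht0' ht1' (by ring)
    have hmin := hmin₁ hmem
    simp only [smul_eq_mul] at hineq
    have : f u₁ ≤ t * f u₂ + (1 - t) * f u₁ - t * (1 - t) * A := by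
      calc f u₁ ≤ f (t • u₂ + (1 - t) • u₁) := hmin
        _ ≤ t * f u₂ + (1 - t) * f u₁ - t * (1 - t) * A := hineq
    have h' : t * ((1 - t) * A) ≤ t * (f u₂ - f u₁) := by nlinarith
    exact le_of_mul_le_mul_left (by linarith [h']) ht0
  -- hence A ≤ 2ε
  have hA2 : A ≤ 2 * ε := by
    by_contra h
    push_neg at h
    have hApos : 0 < A := lt_of_le_of_lt (by linarith) h
    set t : ℝ := (A - 2 * ε) / (2 * A) with htdef
    have ht0 : 0 < t := div_pos (by linarith) (by positivity)
    have ht1 : t < 1 := by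
      rw [htdef, div_lt_one (by positivity)]
      linarith
    have := hseg t ht0 ht1
    have h1t : (1 - t) * A = (A + 2 * ε) / 2 := by
      field_simp [htdef]
      have htA : t * A = (A - 2 * ε) / 2 := by rw [htdef]; field_simp
      linarith
    rw [h1t] at this
    linarith
  -- conclude
  have hnorm : ‖u₁ - u₂‖ ^ 2 ≤ 4 * (ε / μ) := by
    have : ‖u₂ - u₁‖ ^ 2 ≤ 4 * ε / μ := by
      rw [le_div_iff₀ hμ]
      nlinarith [hA2]
    rw [show u₁ - u₂ = -(u₂ - u₁) from (neg_sub u₂ u₁).symm, norm_neg]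
    linarith [this, (by ring : 4 * ε / μ = 4 * (ε / μ))]
  calc ‖u₁ - u₂‖ = Real.sqrt (‖u₁ - u₂‖ ^ 2) := (Real.sqrt_sq (norm_nonneg _)).symm
    _ ≤ Real.sqrt (4 * (ε / μ)) := Real.sqrt_le_sqrt hnorm
    _ = 2 * Real.sqrt (ε / μ) := by
        rw [show (4:ℝ) = 2 ^ 2 by norm_num, Real.sqrt_mul (by positivity),
          Real.sqrt_sq (by norm_num)]
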